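/- arXiv:2503.08394 — 2 statements merged into one kernel-verified Lean document; each statement's English description precedes it below -/
import Mathlib

section
/- Let K be a symmetric positive semidefinite block matrix [[A, B], [Bᵀ, E]] with A n×n and E m×m, and let σ > 0. Define the conditional covariance S = E − Bᵀ(A + σ⁻²I)⁻¹B. Then det(I + σ⁻² E) ≥ det(I + σ⁻² S). -/
open Matrix

private lemma psd_smul {k : ℕ} {c : ℝ} {M : Matrix (Fin k) (Fin k) ℝ}
    (hc : 0 ≤ c) (hM : M.PosSemidef) : (c • M).PosSemidef := by
  refine ⟨?_, fun x => ?_⟩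
  · have h := hM.1
    unfold Matrix.IsHermitian at h ⊢
    rw [conjTranspose_smul, h, star_trivial]
  · have := mul_nonneg hc (hM.2 x); simp only [Finsupp.mul_sum] at this; convert this using 1; simp only [Finsupp.sum, Matrix.smul_apply, smul_eq_mul]; exact Finset.sum_congr rfl fun _ _ => Finset.sum_congr rfl fun _ _ => by ring

private lemma one_le_det_one_add_psd {k : ℕ} {Z : Matrix (Fin k) (Fin k) ℝ}
    (hZ : Z.PosSemidef) : 1 ≤ ((1 : Matrix (Fin k) (Fin k) ℝ) + Z).det := by
  have hH := hZ.1
  set U : Matrix (Fin k) (Fin k) ℝ := (hH.eigenvectorUnitary : Matrix (Fin k) (Fin k) ℝ) with hU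
  have hUU : U * star U = 1 := (Matrix.mem_unitaryGroup_iff).mp hH.eigenvectorUnitary.2
  have hspec : Z = U * diagonal (RCLike.ofReal ∘ hH.eigenvalues) * star U := hH.spectral_theorem
  have key : (1 : Matrix (Fin k) (Fin k) ℝ) + Z
      = U * ((1 : Matrix (Fin k) (Fin k) ℝ) + diagonal (RCLike.ofReal ∘ hH.eigenvalues)) * star U := by
    rw [Matrix.mul_add, Matrix.add_mul, Matrix.mul_one, hUU, ← hspec]
  rw [key, det_mul, det_mul]
  have hdetU : U.det * (star U).det = 1 := by rw [← det_mul, hUU, det_one]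
  have hrearr : U.det * ((1 : Matrix (Fin k) (Fin k) ℝ) + diagonal (RCLike.ofReal ∘ hH.eigenvalues)).det * (star U).det
      = ((1 : Matrix (Fin k) (Fin k) ℝ) + diagonal (RCLike.ofReal ∘ hH.eigenvalues)).det := by
    calc U.det * ((1 : Matrix (Fin k) (Fin k) ℝ) + diagonal (RCLike.ofReal ∘ hH.eigenvalues)).det * (star U).det
        = (U.det * (star U).det) * ((1 : Matrix (Fin k) (Fin k) ℝ) + diagonal (RCLike.ofReal ∘ hH.eigenvalues)).det := by ring
      _ = _ := by rw [hdetU, one_mul]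
  rw [hrearr]
  have : (1 : Matrix (Fin k) (Fin k) ℝ) + diagonal (RCLike.ofReal ∘ hH.eigenvalues)
      = diagonal (fun i => 1 + hH.eigenvalues i) := by
    rw [← diagonal_one, diagonal_add]
    rfl
  rw [this, det_diagonal]
  calc (1:ℝ) = ∏ _i : Fin k, (1:ℝ) := by simp
    _ ≤ ∏ i, (1 + hH.eigenvalues i) := by
        refine Finset.prod_le_prod (fun i _ => zero_le_one) fun i _ => ?_
        linarith [hZ.eigenvalues_nonneg i]

private lemma det_mono_add_psd {k : ℕ} {X Y : Matrix (Fin k) (Fin k) ℝ}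
    (hX : X.PosDef) (hY : Y.PosSemidef) : X.det ≤ (X + Y).det := by
  open scoped MatrixOrder in set R := CFC.sqrt X with hRdef
  open scoped MatrixOrder in have hR : R.PosSemidef := (CFC.sqrt_nonneg X).posSemidef
  open scoped MatrixOrder in have hRR : R * R = X := CFC.sqrt_mul_sqrt_self X hX.posSemidef.nonneg
  have hdetR : R.det * R.det = X.det := by rw [← det_mul, hRR]
  have hXp : 0 < X.det := hX.det_pos
  have hRdet : IsUnit R.det := by
    rcases eq_or_ne R.det 0 with h | h
    · exfalso; rw [h, mul_zero] at hdetR; linarith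
    · exact h.isUnit
  have hRinv : R * R⁻¹ = 1 := mul_nonsing_inv R hRdet
  have hRinv' : R⁻¹ * R = 1 := nonsing_inv_mul R hRdet
  have hZ : (R⁻¹ * Y * R⁻¹).PosSemidef := by
    have h1 := hY.conjTranspose_mul_mul_same (R⁻¹)
    rwa [hR.inv.1] at h1
  have key : X + Y = R * ((1 : Matrix (Fin k) (Fin k) ℝ) + R⁻¹ * Y * R⁻¹) * R := by
    rw [Matrix.mul_add, Matrix.add_mul, Matrix.mul_one, hRR]
    congr 1
    rw [show R * (R⁻¹ * Y * R⁻¹) * R = (R * R⁻¹) * Y * (R⁻¹ * R) by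
      simp only [Matrix.mul_assoc], hRinv, hRinv', Matrix.one_mul, Matrix.mul_one]
  rw [key, det_mul, det_mul]
  have h1 := one_le_det_one_add_psd hZ
  calc X.det = (R.det * R.det) * 1 := by rw [hdetR, mul_one]
    _ ≤ (R.det * R.det) * ((1 : Matrix (Fin k) (Fin k) ℝ) + R⁻¹ * Y * R⁻¹).det := by
        apply mul_le_mul_of_nonneg_left h1
        rw [hdetR]; exact hXp.le
    _ = R.det * ((1 : Matrix (Fin k) (Fin k) ℝ) + R⁻¹ * Y * R⁻¹).det * R.det := by ring

theorem det_cond_cov_le_det {n m : ℕ}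
    (A : Matrix (Fin n) (Fin n) ℝ) (B : Matrix (Fin n) (Fin m) ℝ)
    (E : Matrix (Fin m) (Fin m) ℝ)
    (hK : (Matrix.fromBlocks A B Bᵀ E).PosSemidef) (σ : ℝ) (hσ : 0 < σ) :
    ((1 : Matrix (Fin m) (Fin m) ℝ) + (σ ^ 2)⁻¹ •
      (E - Bᵀ * (A + (σ ^ 2)⁻¹ • (1 : Matrix (Fin n) (Fin n) ℝ))⁻¹ * B)).det ≤
    ((1 : Matrix (Fin m) (Fin m) ℝ) + (σ ^ 2)⁻¹ • E).det := by
  set c : ℝ := (σ ^ 2)⁻¹ with hc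
  have hcpos : 0 < c := by positivity
  set M : Matrix (Fin n) (Fin n) ℝ := A + c • (1 : Matrix (Fin n) (Fin n) ℝ) with hM
  -- A is PSD
  have hA : A.PosSemidef := by
    have h := hK.submatrix (Sum.inl : Fin n → Fin n ⊕ Fin m)
    have he : (Matrix.fromBlocks A B Bᵀ E).submatrix Sum.inl Sum.inl = A :=
      Matrix.ext fun i j => rfl
    rwa [he] at h
  -- c • 1 is PosDef
  have hcI : (c • (1 : Matrix (Fin n) (Fin n) ℝ)).PosDef := by
    rw [smul_one_eq_diagonal]
    exact posDef_diagonal_iff.mpr fun _ => hcpos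
  have hMpd : M.PosDef := Matrix.PosDef.posSemidef_add hA hcI
  haveI : Invertible M := hMpd.isUnit.invertible
  -- the shifted block matrix is PSD
  have hblk : (Matrix.fromBlocks (c • (1 : Matrix (Fin n) (Fin n) ℝ)) 0 0
      (0 : Matrix (Fin m) (Fin m) ℝ)).PosSemidef := by
    rw [smul_one_eq_diagonal, show (0 : Matrix (Fin n) (Fin m) ℝ) = 0 from rfl,
      show (0 : Matrix (Fin m) (Fin m) ℝ) = diagonal (fun _ => (0:ℝ)) by simp,
      fromBlocks_diagonal]
    refine posSemidef_diagonal_iff.mpr fun i => ?_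
    cases i <;> simp [hcpos.le]
  have hN : (Matrix.fromBlocks M B Bᵀ E).PosSemidef := by
    have : Matrix.fromBlocks M B Bᵀ E
        = Matrix.fromBlocks A B Bᵀ E + Matrix.fromBlocks (c • (1 : Matrix (Fin n) (Fin n) ℝ)) 0 0 0 := by
      rw [fromBlocks_add, add_zero, add_zero, add_zero]
    rw [this]
    exact hK.add hblk
  -- Schur complement is PSD
  have hBt : Bᴴ = Bᵀ := conjTranspose_eq_transpose_of_trivial B
  have hS : (E - Bᵀ * M⁻¹ * B).PosSemidef := by
    rw [← hBt]
    exact (PosDef.fromBlocks₁₁ B E hMpd).mp (by rwa [hBt])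
  -- the added term is PSD
  have hW : (c • (Bᵀ * M⁻¹ * B)).PosSemidef := by
    refine psd_smul hcpos.le ?_
    have := hMpd.inv.posSemidef.conjTranspose_mul_mul_same B
    rwa [hBt] at this
  -- X := 1 + c • S is PosDef
  have hX : ((1 : Matrix (Fin m) (Fin m) ℝ) + c • (E - Bᵀ * M⁻¹ * B)).PosDef :=
    Matrix.PosDef.add_posSemidef Matrix.PosDef.one (psd_smul hcpos.le hS)
  have key := det_mono_add_psd hX hW
  have heq : (1 : Matrix (Fin m) (Fin m) ℝ) + c • (E - Bᵀ * M⁻¹ * B) + c • (Bᵀ * M⁻¹ * B)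
      = (1 : Matrix (Fin m) (Fin m) ℝ) + c • E := by
    rw [smul_sub]; abel
  rw [heq] at key
  exact key
end

section
/- Let K be a symmetric positive semidefinite block matrix [[A, B], [Bᵀ, E]] with σ > 0, and let S = E − Bᵀ(A + σ⁻²I)⁻¹B. Then (1/2)·log(det(I + σ⁻²E)) ≥ (1/2)·log(det(I + σ⁻²S)). -/
open Matrix

lemma smul_posSemidef {k : ℕ} {c : ℝ} (hc : 0 ≤ c) {M : Matrix (Fin k) (Fin k) ℝ}
    (hM : M.PosSemidef) : (c • M).PosSemidef := by
  refine ⟨?_, fun x => ?_⟩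
  · unfold Matrix.IsHermitian
    rw [conjTranspose_smul, hM.1]
    simp
  · have h := mul_nonneg hc (hM.2 x)
    simp only [Finsupp.mul_sum] at h
    refine le_of_le_of_eq h ?_
    simp only [Matrix.smul_apply, smul_eq_mul]
    congr 1; ext i xi; congr 1; ext j xj; ring

lemma one_le_det_one_add {k : ℕ} {R : Matrix (Fin k) (Fin k) ℝ} (hR : R.PosSemidef) :
    1 ≤ (1 + R).det := by
  have h := hR.1
  have hspec := h.spectral_theorem
  set U : Matrix (Fin k) (Fin k) ℝ := (h.eigenvectorUnitary : Matrix (Fin k) (Fin k) ℝ)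
  have hU : U * star U = 1 := (Matrix.mem_unitaryGroup_iff).mp h.eigenvectorUnitary.2
  have hU' : star U * U = 1 := (Matrix.mem_unitaryGroup_iff').mp h.eigenvectorUnitary.2
  have key : 1 + R = U * (1 + diagonal (RCLike.ofReal ∘ h.eigenvalues)) * star U := by
    conv_lhs => rw [hspec]
    rw [Unitary.conjStarAlgAut_apply, mul_add, add_mul, mul_one, hU]
  rw [key, det_mul, det_mul, mul_comm, ← mul_assoc, ← det_mul, hU', det_one, one_mul]
  have : (1 : Matrix (Fin k) (Fin k) ℝ) + diagonal (RCLike.ofReal ∘ h.eigenvalues)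
      = diagonal (fun i => 1 + h.eigenvalues i) := by
    rw [← diagonal_one, diagonal_add]
    rfl
  rw [this, det_diagonal]
  calc (1:ℝ) = ∏ _i : Fin k, 1 := by simp
    _ ≤ ∏ i, (1 + h.eigenvalues i) :=
        Finset.prod_le_prod (fun i _ => zero_le_one)
          (fun i _ => by linarith [hR.eigenvalues_nonneg i])

open scoped MatrixOrder in
lemma det_le_det_add {k : ℕ} {M P : Matrix (Fin k) (Fin k) ℝ}
    (hM : M.PosDef) (hP : P.PosSemidef) : M.det ≤ (M + P).det := by
  set Q := CFC.sqrt M with hQ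
  have hQps : Q.PosSemidef := (CFC.sqrt_nonneg M).posSemidef
  have hQQ : Q * Q = M := CFC.sqrt_mul_sqrt_self M hM.posSemidef.nonneg
  have hdetQ : Q.det * Q.det = M.det := by rw [← det_mul, hQQ]
  have hQdet : Q.det ≠ 0 := by
    intro h0
    have := hM.det_pos
    rw [← hdetQ, h0, mul_zero] at this
    exact lt_irrefl _ this
  have hQinv : Q⁻¹ᴴ = Q⁻¹ := by rw [conjTranspose_nonsing_inv, hQps.1]
  have hRps : (Q⁻¹ * P * Q⁻¹).PosSemidef := by
    have := hP.conjTranspose_mul_mul_same Q⁻¹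
    rwa [hQinv] at this
  have hQunit : IsUnit Q.det := isUnit_iff_ne_zero.mpr hQdet
  have key : M + P = Q * (1 + Q⁻¹ * P * Q⁻¹) * Q := by
    rw [mul_add, add_mul, mul_one, hQQ, ← mul_assoc, ← mul_assoc,
      mul_nonsing_inv _ hQunit, one_mul, mul_assoc, nonsing_inv_mul _ hQunit, mul_one]
  rw [key, det_mul, det_mul]
  calc M.det = Q.det * 1 * Q.det := by rw [mul_one, hdetQ]
    _ ≤ Q.det * (1 + Q⁻¹ * P * Q⁻¹).det * Q.det := by
        nlinarith [one_le_det_one_add hRps, sq_nonneg Q.det, hM.det_pos, hdetQ]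

theorem log_det_cond_cov_le {n m : ℕ}
    (A : Matrix (Fin n) (Fin n) ℝ) (B : Matrix (Fin n) (Fin m) ℝ)
    (E : Matrix (Fin m) (Fin m) ℝ)
    (hK : (Matrix.fromBlocks A B Bᵀ E).PosSemidef) (σ : ℝ) (hσ : 0 < σ) :
    (1 / 2 : ℝ) * Real.log ((1 : Matrix (Fin m) (Fin m) ℝ) + (σ ^ 2)⁻¹ •
      (E - Bᵀ * (A + (σ ^ 2)⁻¹ • (1 : Matrix (Fin n) (Fin n) ℝ))⁻¹ * B)).det ≤
    (1 / 2 : ℝ) * Real.log ((1 : Matrix (Fin m) (Fin m) ℝ) + (σ ^ 2)⁻¹ • E).det := by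
  set c : ℝ := (σ ^ 2)⁻¹ with hc'
  have hc : 0 < c := by positivity
  have hBt : Bᴴ = Bᵀ := by ext i j; simp
  -- c • 1 is positive definite
  have h1n : ((c : ℝ) • (1 : Matrix (Fin n) (Fin n) ℝ)).PosDef := by
    rw [smul_one_eq_diagonal]
    exact posDef_diagonal_iff.mpr fun _ => hc
  -- the shifted block matrix is PSD
  have hblockdiag : (fromBlocks (c • (1 : Matrix (Fin n) (Fin n) ℝ))
      (0 : Matrix (Fin n) (Fin m) ℝ) (0 : Matrix (Fin m) (Fin n) ℝ)
      (0 : Matrix (Fin m) (Fin m) ℝ)).PosSemidef := by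
    haveI := (c • (1 : Matrix (Fin n) (Fin n) ℝ)).invertibleOfIsUnitDet
      h1n.det_pos.ne'.isUnit
    have h0 : (0 : Matrix (Fin n) (Fin m) ℝ)ᴴ = (0 : Matrix (Fin m) (Fin n) ℝ) := by simp
    rw [← h0]
    refine (PosDef.fromBlocks₁₁ 0 0 h1n).mpr ?_
    simpa using (PosSemidef.zero (n := Fin m) (R := ℝ))
  have hK' : (fromBlocks (A + c • (1 : Matrix (Fin n) (Fin n) ℝ)) B Bᵀ E).PosSemidef := by
    have : fromBlocks (A + c • (1 : Matrix (Fin n) (Fin n) ℝ)) B Bᵀ E =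
        fromBlocks A B Bᵀ E + fromBlocks (c • (1 : Matrix (Fin n) (Fin n) ℝ)) 0 0 0 := by
      rw [fromBlocks_add]; simp
    rw [this]
    exact hK.add hblockdiag
  have hApsd : A.PosSemidef := by
    have h := hK.submatrix (Sum.inl : Fin n → Fin n ⊕ Fin m)
    have heq : (fromBlocks A B Bᵀ E).submatrix Sum.inl Sum.inl = A := by
      ext i j; simp [fromBlocks]
    rwa [heq] at h
  have hA' : (A + c • (1 : Matrix (Fin n) (Fin n) ℝ)).PosDef :=
    Matrix.PosDef.posSemidef_add hApsd h1n
  haveI := (A + c • (1 : Matrix (Fin n) (Fin n) ℝ)).invertibleOfIsUnitDet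
    hA'.det_pos.ne'.isUnit
  -- Schur complement is PSD
  have hS : (E - Bᵀ * (A + c • (1 : Matrix (Fin n) (Fin n) ℝ))⁻¹ * B).PosSemidef := by
    have := (PosDef.fromBlocks₁₁ B E hA').mp (by rwa [hBt])
    rwa [hBt] at this
  have hM : ((1 : Matrix (Fin m) (Fin m) ℝ) +
      c • (E - Bᵀ * (A + c • (1 : Matrix (Fin n) (Fin n) ℝ))⁻¹ * B)).PosDef :=
    PosDef.one.add_posSemidef (smul_posSemidef hc.le hS)
  have hP : (c • (Bᵀ * (A + c • (1 : Matrix (Fin n) (Fin n) ℝ))⁻¹ * B)).PosSemidef := by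
    refine smul_posSemidef hc.le ?_
    have := hA'.posSemidef.inv.conjTranspose_mul_mul_same B
    rwa [hBt] at this
  have hsum : ((1 : Matrix (Fin m) (Fin m) ℝ) +
        c • (E - Bᵀ * (A + c • (1 : Matrix (Fin n) (Fin n) ℝ))⁻¹ * B)) +
      c • (Bᵀ * (A + c • (1 : Matrix (Fin n) (Fin n) ℝ))⁻¹ * B) =
      (1 : Matrix (Fin m) (Fin m) ℝ) + c • E := by
    rw [smul_sub]; abel
  have hdet := det_le_det_add hM hP
  rw [hsum] at hdet
  have hlog := Real.log_le_log hM.det_pos hdet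
  linarith
end
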